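/- A 3-Partition instance a_1, ..., a_{3m} with sum m·B is a yes-instance if and only if the corresponding multi-instanced scheduling instance with 3m applications (q_i = 1, p_i = a_i), m machines with memory capacity Q = 3 and CPU capacity P = B, admits an assignment using at most m machines satisfying all memory and load constraints. -/

import Mathlib

/-- Reduction correctness underlying NP-hardness of machine minimization with unit
memory and arbitrary CPU loads: a 3-Partition instance `a` (sum `m * B`, with
`B/4 < a_i < B/2`) is a yes-instance iff the `3m` applications with `q_i = 1`,
`p_i = a_i` admit a feasible assignment on `m` machines with memory capacity
`Q = 3` and CPU capacity `P = B`. -/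
theorem three_partition_iff_packing (m B : ℕ) (hm : 0 < m)
    (a : Fin (3 * m) → ℕ) (ha : ∀ i, 0 < a i)
    (hbound : ∀ i, B < 4 * a i ∧ 2 * a i < B)
    (hsum : ∑ i, a i = m * B) :
    (∃ f : Fin (3 * m) → Fin m,
      (∀ j, (Finset.univ.filter (fun i => f i = j)).card = 3) ∧
      (∀ j, ∑ i ∈ Finset.univ.filter (fun i => f i = j), a i = B)) ↔
    (∃ x : Fin (3 * m) → Fin m → ℚ,
      (∀ i j, 0 ≤ x i j) ∧
      (∀ i, (a i : ℚ) ≤ ∑ j, x i j) ∧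
      (∀ j, (Finset.univ.filter (fun i => x i j ≠ 0)).card ≤ 3) ∧
      (∀ j, ∑ i, x i j ≤ (B : ℚ))) := by
  constructor
  · rintro ⟨f, hcard, hload⟩
    refine ⟨fun i j => if f i = j then (a i : ℚ) else 0, ?_, ?_, ?_, ?_⟩
    · intro i j; dsimp only; split <;> positivity
    · intro i
      dsimp only
      rw [Finset.sum_ite_eq (Finset.univ) (f i) (fun _ => (a i : ℚ))]
      simp
    · intro j
      have heq : (Finset.univ.filter (fun i => (if f i = j then (a i : ℚ) else 0) ≠ 0))
          = Finset.univ.filter (fun i => f i = j) := by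
        apply Finset.filter_congr
        intro i _
        constructor
        · intro h
          by_contra hne
          simp [hne] at h
        · intro h
          simp only [h, if_true]
          exact_mod_cast (ha i).ne'
      rw [heq, hcard j]
    · intro j
      dsimp only
      rw [← Finset.sum_filter]
      have := hload j
      have hcast : ((∑ i ∈ Finset.univ.filter (fun i => f i = j), a i : ℕ) : ℚ) = (B : ℚ) := by
        exact_mod_cast congrArg (Nat.cast : ℕ → ℚ) this
      push_cast at hcast ⊢
      rw [hcast]
  · rintro ⟨x, hx0, hxa, hcard, hxB⟩
    classical
    set T : Fin (3 * m) → Finset (Fin m) :=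
      fun i => Finset.univ.filter (fun j => x i j ≠ 0) with hTdef
    -- each application has at least one machine
    have hTne : ∀ i, (T i).Nonempty := by
      intro i
      rw [hTdef]
      rw [Finset.filter_nonempty_iff]
      by_contra h
      push_neg at h
      have hz : ∑ j, x i j = 0 :=
        Finset.sum_eq_zero (fun j hj => h j (Finset.mem_univ j))
      have h2 : (a i : ℚ) ≤ 0 := by rw [← hz]; exact hxa i
      have h3 : (0 : ℚ) < a i := by exact_mod_cast ha i
      linarith
    have hT1le : ∀ i, 1 ≤ (T i).card := fun i => Finset.card_pos.mpr (hTne i)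
    -- double counting
    have hswap : ∑ i, (T i).card =
        ∑ j, (Finset.univ.filter (fun i => x i j ≠ 0)).card := by
      simp only [hTdef, Finset.card_filter]
      rw [Finset.sum_comm]
    have hub : ∑ i, (T i).card ≤ 3 * m := by
      rw [hswap]
      calc ∑ j : Fin m, (Finset.univ.filter (fun i => x i j ≠ 0)).card
          ≤ ∑ _j : Fin m, 3 := Finset.sum_le_sum (fun j _ => hcard j)
        _ = 3 * m := by simp [mul_comm]
    have hlb : 3 * m ≤ ∑ i, (T i).card := by
      calc 3 * m = ∑ _i : Fin (3 * m), 1 := by simp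
        _ ≤ ∑ i, (T i).card := Finset.sum_le_sum (fun i _ => hT1le i)
    have hsumT : ∑ i, (T i).card = 3 * m := le_antisymm hub hlb
    have hT1 : ∀ i, (T i).card = 1 := by
      have h := (Finset.sum_eq_sum_iff_of_le
        (s := (Finset.univ : Finset (Fin (3 * m))))
        (f := fun _ : Fin (3 * m) => 1) (g := fun i => (T i).card)
        (fun i _ => hT1le i)).mp (by simp [hsumT])
      intro i
      exact (h i (Finset.mem_univ i)).symm
    -- extract the unique machine of each application
    choose f hf using fun i => Finset.card_eq_one.mp (hT1 i)
    have hxf : ∀ i j, x i j ≠ 0 → j = f i := by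
      intro i j hj
      have hmem : j ∈ T i := by simp [hTdef, hj]
      rw [hf i] at hmem
      simpa using hmem
    have hfx : ∀ i, x i (f i) ≠ 0 := by
      intro i
      have hmem : f i ∈ T i := by rw [hf i]; simp
      simp only [hTdef, Finset.mem_filter] at hmem
      exact hmem.2
    -- fibers of f coincide with nonzero sets
    have hfiber : ∀ j, Finset.univ.filter (fun i => f i = j)
        = Finset.univ.filter (fun i => x i j ≠ 0) := by
      intro j
      apply Finset.filter_congr
      intro i _
      constructor
      · rintro rfl; exact hfx i
      · intro h; exact (hxf i j h).symm
    have hcard3sum : ∑ j, (Finset.univ.filter (fun i => f i = j)).card = 3 * m := by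
      calc ∑ j, (Finset.univ.filter (fun i => f i = j)).card
          = ∑ j, (Finset.univ.filter (fun i => x i j ≠ 0)).card :=
            Finset.sum_congr rfl (fun j _ => by rw [hfiber j])
        _ = ∑ i, (T i).card := hswap.symm
        _ = 3 * m := hsumT
    have hcard3 : ∀ j, (Finset.univ.filter (fun i => f i = j)).card = 3 := by
      have h := (Finset.sum_eq_sum_iff_of_le
        (s := (Finset.univ : Finset (Fin m)))
        (f := fun j : Fin m => (Finset.univ.filter (fun i => f i = j)).card)
        (g := fun _ : Fin m => 3)
        (fun j _ => by rw [hfiber j]; exact hcard j)).mp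
        (by simp [hcard3sum, mul_comm])
      intro j
      exact h j (Finset.mem_univ j)
    -- load per machine
    have haxf : ∀ i, (a i : ℚ) ≤ x i (f i) := by
      intro i
      have h := hxa i
      have hone : ∑ j, x i j = x i (f i) := by
        apply Finset.sum_eq_single
        · intro b _ hb
          by_contra hb0
          exact hb (hxf i b hb0)
        · intro h'; exact absurd (Finset.mem_univ (f i)) h'
      rwa [hone] at h
    have hloadle : ∀ j, ∑ i ∈ Finset.univ.filter (fun i => f i = j), a i ≤ B := by
      intro j
      have h1 : ((∑ i ∈ Finset.univ.filter (fun i => f i = j), a i : ℕ) : ℚ)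
          ≤ ∑ i ∈ Finset.univ.filter (fun i => f i = j), x i j := by
        push_cast
        apply Finset.sum_le_sum
        intro i hi
        have hfij : f i = j := (Finset.mem_filter.mp hi).2
        rw [← hfij]
        exact haxf i
      have h2 : ∑ i ∈ Finset.univ.filter (fun i => f i = j), x i j ≤ ∑ i, x i j :=
        Finset.sum_le_sum_of_subset_of_nonneg (Finset.filter_subset _ _)
          (fun i _ _ => hx0 i j)
      have hle := le_trans h1 (le_trans h2 (hxB j))
      exact_mod_cast hle
    have hloadsum : ∑ j, ∑ i ∈ Finset.univ.filter (fun i => f i = j), a i = m * B := by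
      rw [← hsum]
      exact Finset.sum_fiberwise _ _ _
    have hload : ∀ j, ∑ i ∈ Finset.univ.filter (fun i => f i = j), a i = B := by
      have h := (Finset.sum_eq_sum_iff_of_le
        (s := (Finset.univ : Finset (Fin m)))
        (f := fun j : Fin m => ∑ i ∈ Finset.univ.filter (fun i => f i = j), a i)
        (g := fun _ : Fin m => B)
        (fun j _ => hloadle j)).mp
        (by simp [hloadsum, mul_comm])
      intro j
      exact h j (Finset.mem_univ j)
    exact ⟨f, hcard3, hload⟩
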